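/- Let (A, ∘, •) be a totally compatible di-algebra over a commutative ring k. For all natural numbers i, j, k', l, every list x₀, …, x_{i+j} of i+j+1 elements of A and every list y₀, …, y_{k'+l} of k'+l+1 elements of A, one has μ_{i,j}(x₀,…,x_{i+j}) ∘ μ_{k',l}(y₀,…,y_{k'+l}) = μ_{i+k'+1, j+l}(x₀,…,x_{i+j}, y₀,…,y_{k'+l}). -/

import Mathlib

/-- A pair of `k`-bilinear operations `a` ("∘") and `b` ("•") on a `k`-module `A`
is a *totally compatible di-algebra structure* if `a` and `b` are each associative
and `(x∘y)•z = x∘(y•z) = (x•y)∘z = x•(y∘z)` for all `x y z`. -/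
def IsTotallyCompatibleDialgebra {k A : Type*} [CommRing k] [AddCommGroup A] [Module k A]
    (a b : A →ₗ[k] A →ₗ[k] A) : Prop :=
  (∀ x y z : A, a (a x y) z = a x (a y z)) ∧
  (∀ x y z : A, b (b x y) z = b x (b y z)) ∧
  (∀ x y z : A, b (a x y) z = a x (b y z)) ∧
  (∀ x y z : A, a x (b y z) = a (b x y) z) ∧
  (∀ x y z : A, a (b x y) z = b x (a y z))

/-- The left-associated product `(⋯((x₀ op₁ x₁) op₂ x₂) ⋯ opₙ xₙ)`, where the
operations are recorded as booleans paired with the elements: `true` stands for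
the operation `a` ("∘") and `false` for `b` ("•"). -/
def leftAssocProd {k A : Type*} [CommRing k] [AddCommGroup A] [Module k A]
    (a b : A →ₗ[k] A →ₗ[k] A) (x₀ : A) (l : List (Bool × A)) : A :=
  l.foldl (fun acc p => if p.1 then a acc p.2 else b acc p.2) x₀

/-- The operation `μ_{i,j}` of a totally compatible di-algebra, applied to a list
`x₀ :: [x₁, …, x_{i+j}]` of `i + j + 1` elements:
`μ_{i,j}(x₀,…,x_{i+j}) = (((x₀ ∘ x₁) ∘ ⋯ ∘ x_i) • x_{i+1}) • ⋯ • x_{i+j}`,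
the left-associated product whose first `i` operations are `∘` (i.e. `a`) and
whose last `j` operations are `•` (i.e. `b`).  (On the empty list, which never
occurs under the length hypotheses below, it is defined to be `0`.) -/
def muOp {k A : Type*} [CommRing k] [AddCommGroup A] [Module k A]
    (a b : A →ₗ[k] A →ₗ[k] A) (i j : ℕ) : List A → A
  | [] => 0
  | x₀ :: xs => leftAssocProd a b x₀ ((List.replicate i true ++ List.replicate j false).zip xs)


section Aux
variable {k A : Type*} [CommRing k] [AddCommGroup A] [Module k A]
variable (a b : A →ₗ[k] A →ₗ[k] A)

lemma lap_cons (x : A) (p : Bool × A) (l : List (Bool × A)) :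
    leftAssocProd a b x (p :: l)
      = leftAssocProd a b (if p.1 then a x p.2 else b x p.2) l := rfl

lemma lap_append (x : A) (l₁ l₂ : List (Bool × A)) :
    leftAssocProd a b x (l₁ ++ l₂)
      = leftAssocProd a b (leftAssocProd a b x l₁) l₂ :=
  List.foldl_append

lemma a_lap (h : IsTotallyCompatibleDialgebra a b) (x : A) :
    ∀ (l : List (Bool × A)) (y : A),
      a x (leftAssocProd a b y l) = leftAssocProd a b (a x y) l := by
  intro l
  induction l with
  | nil => intro y; rfl
  | cons p t ih =>
      intro y
      rw [lap_cons, lap_cons, ih]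
      congr 1
      rcases p with ⟨c, z⟩
      cases c
      · simpa using (h.2.2.1 x y z).symm
      · simpa using (h.1 x y z).symm

lemma lap_perm (h : IsTotallyCompatibleDialgebra a b)
    {bs₁ bs₂ : List Bool} (hp : bs₁.Perm bs₂) :
    ∀ (x : A) (zs : List A), bs₁.length ≤ zs.length →
      leftAssocProd a b x (bs₁.zip zs) = leftAssocProd a b x (bs₂.zip zs) := by
  induction hp with
  | nil => intro x zs _; rfl
  | cons c _ ih =>
      intro x zs hlen
      cases zs with
      | nil => simp at hlen
      | cons z zt =>
          simp only [List.zip_cons_cons, lap_cons]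
          exact ih _ _ (by simpa using hlen)
  | swap c d t =>
      intro x zs hlen
      cases zs with
      | nil => simp at hlen
      | cons z₁ zs' =>
        cases zs' with
        | nil => simp at hlen
        | cons z₂ zt =>
            simp only [List.zip_cons_cons, lap_cons]
            congr 1
            have key : b (a x z₁) z₂ = a (b x z₁) z₂ :=
              (h.2.2.1 x z₁ z₂).trans (h.2.2.2.1 x z₁ z₂)
            cases c <;> cases d <;> simp <;>
              first | rfl | exact key | exact key.symm
  | trans p q ih1 ih2 =>
      intro x zs hlen
      exact (ih1 x zs hlen).trans (ih2 x zs (p.length_eq ▸ hlen))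

end Aux

/-- `μ_{i,j}(x₀,…,x_{i+j}) ∘ μ_{k',l}(y₀,…,y_{k'+l})
  = μ_{i+k'+1, j+l}(x₀,…,x_{i+j}, y₀,…,y_{k'+l})`. -/
theorem muOp_comp_left
    {k A : Type*} [CommRing k] [AddCommGroup A] [Module k A]
    (a b : A →ₗ[k] A →ₗ[k] A) (h : IsTotallyCompatibleDialgebra a b)
    (i j k' l : ℕ) (x₀ : A) (xs : List A) (hx : xs.length = i + j)
    (y₀ : A) (ys : List A) (hy : ys.length = k' + l) :
    a (muOp a b i j (x₀ :: xs)) (muOp a b k' l (y₀ :: ys))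
      = muOp a b (i + k' + 1) (j + l) (x₀ :: (xs ++ y₀ :: ys)) := by
  set bx : List Bool := List.replicate i true ++ List.replicate j false with hbx
  set by' : List Bool := List.replicate k' true ++ List.replicate l false with hby
  show a (leftAssocProd a b x₀ (bx.zip xs)) (leftAssocProd a b y₀ (by'.zip ys))
      = leftAssocProd a b x₀
          ((List.replicate (i + k' + 1) true ++ List.replicate (j + l) false).zip
            (xs ++ y₀ :: ys))
  rw [a_lap a b h]
  have h1 : leftAssocProd a b (a (leftAssocProd a b x₀ (bx.zip xs)) y₀) (by'.zip ys)
      = leftAssocProd a b x₀ ((bx ++ true :: by').zip (xs ++ y₀ :: ys)) := by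
    have hzip : (bx ++ true :: by').zip (xs ++ y₀ :: ys)
        = bx.zip xs ++ (true, y₀) :: by'.zip ys := by
      rw [List.zip_append (by simp [hbx, hx])]
      rfl
    rw [hzip, lap_append, lap_cons]
    simp
  rw [h1]
  refine lap_perm a b h ?_ x₀ _ ?_
  · refine List.perm_iff_count.mpr fun c => ?_
    cases c
    · simp [hbx, hby, List.count_append, List.count_replicate, List.count_cons]
    · simp [hbx, hby, List.count_append, List.count_replicate, List.count_cons]
      omega
  · simp [hbx, hby, hx, hy]
    omega
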